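/- With the setup of the previous statements, the evaluation map y ↦ ζ^j induces, for each j, a well-defined surjective ring homomorphism ev_j : S = (R[x]/⟨x^m−1⟩)[y]/⟨y^n−1⟩ → R[x]/⟨x^m−1⟩, and for any ideal C of S and 0 ≤ j ≤ n−1, C_j = ev_j(C). -/

import Mathlib

open Polynomial

/-- `R[x]/⟨x^m - 1⟩`. -/
abbrev Amod (R : Type*) [CommRing R] (m : ℕ) :=
  Polynomial R ⧸ Ideal.span ({X ^ m - 1} : Set (Polynomial R))

noncomputable instance (R : Type*) [CommRing R] (m : ℕ) : CommRing (Amod R m) :=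
  Ideal.Quotient.commRing _

/-- `S = (R[x]/⟨x^m - 1⟩)[y]/⟨y^n - 1⟩`. -/
abbrev Smod (R : Type*) [CommRing R] (m n : ℕ) :=
  Polynomial (Amod R m) ⧸ Ideal.span ({X ^ n - 1} : Set (Polynomial (Amod R m)))

/-- The image of `ζ ∈ R` in `R[x]/⟨x^m - 1⟩`. -/
noncomputable def zetaA {R : Type*} [CommRing R] (m : ℕ) (ζ : R) : Amod R m :=
  Ideal.Quotient.mk _ (C ζ)

/-- The idempotent `θ_j(y) = (1/n) ∑_{k=0}^{n-1} ζ^{(n-j)k} y^k` as an element of `S`. -/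
noncomputable def theta {A : Type*} [CommRing A] (n : ℕ) (ζ : A) (j : ℕ) :
    Polynomial A ⧸ Ideal.span ({X ^ n - 1} : Set (Polynomial A)) :=
  Ideal.Quotient.mk _ (C (Ring.inverse (n : A)) *
    ∑ k ∈ Finset.range n, C (ζ ^ ((n - j) * k)) * X ^ k)

set_option maxHeartbeats 1000000 in
/-- The evaluation `y ↦ ζ^j` induces a well-defined surjective ring homomorphism
`ev_j : S → R[x]/⟨x^m-1⟩`, and for every ideal `C` of `S`, `C_j = ev_j(C)`. -/
theorem evaluation_map_and_Cj
    (R : Type*) [CommRing R] (m n : ℕ) (hm : 0 < m) (hn : 0 < n)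
    (hunit : IsUnit (n : R)) (ζ : R) (hζ : ζ ^ n = 1)
    (hdiff : ∀ i j : ℕ, i ≤ n - 1 → j ≤ n - 1 → i ≠ j → IsUnit (ζ ^ i - ζ ^ j))
    (j : ℕ) (hj : j ≤ n - 1) :
    ∃ ev : Smod R m n →+* Amod R m,
      (∀ F : Polynomial (Amod R m),
        ev (Ideal.Quotient.mk _ F) = F.eval (zetaA m ζ ^ j)) ∧
      Function.Surjective ev ∧
      ∀ C : Ideal (Smod R m n),
        {g : Amod R m |
          Ideal.Quotient.mk _ (Polynomial.C g) * theta n (zetaA m ζ) j ∈ C} =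
        ev '' (C : Set (Smod R m n)) := by
  classical
  have hjn : j < n := by omega
  set A := Amod R m with hA
  set δ : A := zetaA m ζ with hδ
  have hδn : δ ^ n = 1 := by
    simp only [hδ, zetaA, ← map_pow, ← C_pow, hζ, map_one]
  have hnA : IsUnit ((n : ℕ) : A) := by
    have := hunit.map ((Ideal.Quotient.mk
      (Ideal.span ({X ^ m - 1} : Set (Polynomial R)))).comp C)
    simpa using this
  have hδjn : (δ ^ j) ^ n = 1 := by
    rw [← pow_mul, mul_comm, pow_mul, hδn, one_pow]
  -- the evaluation map
  have hker : ∀ a ∈ Ideal.span ({X ^ n - 1} : Set (Polynomial A)),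
      (evalRingHom (δ ^ j)) a = 0 := by
    intro a ha
    rw [Ideal.mem_span_singleton] at ha
    obtain ⟨c, rfl⟩ := ha
    simp [hδjn]
  set ev : Smod R m n →+* A := Ideal.Quotient.lift _ (evalRingHom (δ ^ j)) hker with hev
  have hevmk : ∀ F : Polynomial A,
      ev (Ideal.Quotient.mk _ F) = F.eval (δ ^ j) := fun F => rfl
  set mk' : Polynomial A →+* Smod R m n :=
    Ideal.Quotient.mk (Ideal.span ({X ^ n - 1} : Set (Polynomial A))) with hmk'
  set t : Smod R m n := mk' X with hT
  have ht : t ^ n = 1 := by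
    rw [hT, ← map_pow, ← map_one mk']
    exact Ideal.Quotient.eq.mpr (Ideal.mem_span_singleton_self _)
  set c : A →+* Smod R m n := mk'.comp C with hc
  set N : ℕ := n - 1 with hN0
  have hN : n = N + 1 := by omega
  have hexp : ∀ k : ℕ, δ ^ j * δ ^ ((n - j) * (k + 1)) = δ ^ ((n - j) * k) := by
    intro k
    rw [← pow_add]
    have h1 : j + (n - j) * (k + 1) = (n - j) * k + n := by
      have := hjn.le
      nlinarith [Nat.sub_add_cancel this]
    rw [h1, pow_add, hδn, mul_one]
  set Sg : Smod R m n := ∑ k ∈ Finset.range n, c (δ ^ ((n - j) * k)) * t ^ k with hSg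
  have hsum : t * Sg = c (δ ^ j) * Sg := by
    have L : t * Sg = ∑ k ∈ Finset.range n, c (δ ^ ((n - j) * k)) * t ^ (k + 1) := by
      rw [hSg, Finset.mul_sum]
      exact Finset.sum_congr rfl fun k _ => by ring
    have Rr : c (δ ^ j) * Sg
        = ∑ k ∈ Finset.range n, c (δ ^ j * δ ^ ((n - j) * k)) * t ^ k := by
      rw [hSg, Finset.mul_sum]
      exact Finset.sum_congr rfl fun k _ => by rw [map_mul]; ring
    rw [L, Rr]
    have e1 := Finset.sum_range_succ
      (fun k => c (δ ^ ((n - j) * k)) * t ^ (k + 1)) N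
    have e2 := Finset.sum_range_succ'
      (fun k => c (δ ^ j * δ ^ ((n - j) * k)) * t ^ k) N
    rw [← hN] at e1 e2
    rw [e1, e2]
    congr 1
    · refine Finset.sum_congr rfl fun k _ => ?_
      rw [hexp k]
    · have h2 : δ ^ ((n - j) * n) = 1 := by rw [mul_comm, pow_mul, hδn, one_pow]
      have h3 := hexp N
      rw [← hN, h2, mul_one] at h3
      simp [ht, ← h3]
  set θ : Smod R m n := theta n δ j with hθ
  have hθexp : θ = c (Ring.inverse ((n : ℕ) : A)) * Sg := by
    rw [hθ, theta, hSg]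
    simp only [map_mul, map_sum, map_pow, hc, RingHom.comp_apply]
    rfl
  have htθ : t * θ = c (δ ^ j) * θ := by
    rw [hθexp, mul_left_comm, hsum, mul_left_comm]
  -- key lemma: F(t) * θ = F(δ^j) * θ
  have hkey : ∀ F : Polynomial A, mk' F * θ = c (F.eval (δ ^ j)) * θ := by
    intro F
    induction F using Polynomial.induction_on with
    | C a => simp [hc]
    | add p q hp hq =>
        rw [map_add, eval_add, map_add, add_mul, add_mul, hp, hq]
    | monomial k a ih =>
        have h4 : mk' (C a * X ^ (k + 1)) = mk' (C a * X ^ k) * t := by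
          rw [hT, ← map_mul, pow_succ, mul_assoc]
        rw [h4, mul_assoc, htθ, mul_left_comm (mk' (C a * X ^ k)), ih,
          ← mul_assoc, ← map_mul]
        congr 2
        simp only [eval_mul, eval_C, eval_pow, eval_X, pow_succ]
        ring
  -- ev θ = 1
  have hθ1 : ev θ = 1 := by
    rw [hθ, theta, hevmk]
    simp only [eval_mul, eval_C, eval_finset_sum, eval_mul, eval_C, eval_pow, eval_X]
    have : ∀ k ∈ Finset.range n, δ ^ ((n - j) * k) * (δ ^ j) ^ k = 1 := by
      intro k _
      rw [← pow_mul, ← pow_add, show (n - j) * k + j * k = n * k by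
        have := hjn.le; nlinarith [Nat.sub_add_cancel this],
        pow_mul, hδn, one_pow]
    rw [Finset.sum_congr rfl this, Finset.sum_const, Finset.card_range,
      nsmul_eq_mul, mul_one, Ring.inverse_mul_cancel _ hnA]
  refine ⟨ev, hevmk, fun g => ⟨mk' (C g), by simp [hevmk]⟩, fun Cid => ?_⟩
  ext g
  constructor
  · intro hg
    refine ⟨mk' (C g) * θ, hg, ?_⟩
    rw [map_mul, hθ1, mul_one, hevmk, eval_C]
  · rintro ⟨s, hs, rfl⟩
    obtain ⟨F, rfl⟩ := Ideal.Quotient.mk_surjective s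
    show mk' (C (ev (mk' F))) * θ ∈ Cid
    rw [hevmk, show mk' (C (F.eval (δ ^ j))) = c (F.eval (δ ^ j)) from rfl, ← hkey]
    exact Cid.mul_mem_right θ hs
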